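/- arXiv:1311.0649 — 5 statements merged into one kernel-verified Lean document; each statement's English description precedes it below -/
import Mathlib

section
/- The function f defined by f(t) = (1/√t)·log((1+√t)/(1-√t)) for 0<t<1, f(0)=2, and f(t) = (2/√|t|)·arctan(√|t|) for t<0, is continuous and strictly increasing on (-∞,1) with range (0,∞). -/
open Real Set
open Filter Topology

/-- The function `f` from the paper, defined piecewise on `(-∞, 1)`. -/
noncomputable def kingmanF (t : ℝ) : ℝ :=
  if 0 < t then (1 / Real.sqrt t) * Real.log ((1 + Real.sqrt t) / (1 - Real.sqrt t))
  else if t = 0 then 2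
  else (2 / Real.sqrt |t|) * Real.arctan (Real.sqrt |t|)

lemma hasDerivAt_glog {x : ℝ} (hx : x ∈ Ioo (-1:ℝ) 1) :
    HasDerivAt (fun x => Real.log ((1 + x) / (1 - x))) (2 / (1 - x^2)) x := by
  have h1 : (0:ℝ) < 1 + x := by linarith [hx.1]
  have h2 : (0:ℝ) < 1 - x := by linarith [hx.2]
  have h3 : (1:ℝ) - x^2 ≠ 0 := by nlinarith [hx.1, hx.2]
  have heq : (fun x => Real.log ((1 + x) / (1 - x))) =ᶠ[nhds x]
      (fun x => Real.log (1 + x) - Real.log (1 - x)) := by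
    filter_upwards [Ioo_mem_nhds hx.1 hx.2] with y hy
    rw [Real.log_div (by nlinarith [hy.1]) (by nlinarith [hy.2])]
  have hd : HasDerivAt (fun x => Real.log (1 + x) - Real.log (1 - x))
      (1/(1+x) - (-1)/(1-x)) x := by
    have d1 : HasDerivAt (fun x : ℝ => 1 + x) 1 x := by
      simpa using (hasDerivAt_id x).const_add 1
    have d2 : HasDerivAt (fun x : ℝ => 1 - x) (-1) x := by
      simpa using (hasDerivAt_id x).const_sub 1
    exact (d1.log h1.ne').sub (d2.log h2.ne')
  have hd' : HasDerivAt (fun x => Real.log (1 + x) - Real.log (1 - x)) (2 / (1 - x^2)) x := by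
    convert hd using 1
    field_simp
    ring
  exact hd'.congr_of_eventuallyEq heq

lemma arctan_lt_self' {y : ℝ} (hy : 0 < y) : Real.arctan y < y := by
  have h : StrictMonoOn (fun y => y - Real.arctan y) (Ici 0) := by
    apply strictMonoOn_of_deriv_pos (convex_Ici 0)
    · exact (continuous_id.sub Real.continuous_arctan).continuousOn
    · intro x hx
      rw [interior_Ici] at hx
      have hx' : (0:ℝ) < x := hx
      rw [HasDerivAt.deriv (f := fun y => y - Real.arctan y)
        ((hasDerivAt_id' (x := x)).sub (Real.hasDerivAt_arctan x))]
      have : 1 / (1 + x^2) < 1 := by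
        rw [div_lt_one (by positivity)]; nlinarith
      linarith
  have := h (self_mem_Ici) (le_of_lt hy : (0:ℝ) ≤ y) hy
  simpa using this

lemma div_lt_arctan {y : ℝ} (hy : 0 < y) : y / (1 + y^2) < Real.arctan y := by
  have h : StrictMonoOn (fun y => Real.arctan y - y / (1 + y^2)) (Ici 0) := by
    apply strictMonoOn_of_deriv_pos (convex_Ici 0)
    · exact (Real.continuous_arctan.sub (continuous_id.div
        (by continuity) (fun x => by positivity))).continuousOn
    · intro x hx
      rw [interior_Ici] at hx
      have hx' : (0:ℝ) < x := hx
      have hne : (1:ℝ) + x^2 ≠ 0 := by positivity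
      have hd : HasDerivAt (fun y : ℝ => Real.arctan y - y / (1 + y^2))
          (2 * x^2 / (1 + x^2)^2) x := by
        have d2 : HasDerivAt (fun y : ℝ => y / (1 + y^2))
            ((1 * (1 + x^2) - x * (2 * x)) / (1 + x^2)^2) x := by
          exact (hasDerivAt_id x).div
            (by simpa using ((hasDerivAt_pow 2 x).const_add 1)) hne
        have := (Real.hasDerivAt_arctan x).sub d2
        refine this.congr_deriv ?_
        field_simp
        ring
      rw [hd.deriv]
      exact div_pos (by nlinarith) (by positivity)
  have := h self_mem_Ici (le_of_lt hy) hy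
  simpa using this

lemma arctan_div_strictAnti : StrictAntiOn (fun y => Real.arctan y / y) (Ioi (0:ℝ)) := by
  apply strictAntiOn_of_deriv_neg (convex_Ioi 0)
  · exact Real.continuous_arctan.continuousOn.div continuousOn_id
      (fun x hx => ne_of_gt hx)
  · intro x hx
    rw [interior_Ioi] at hx
    have hx' : (0:ℝ) < x := hx
    have hd : HasDerivAt (fun y => Real.arctan y / y)
        ((1 / (1 + x^2) * x - Real.arctan x * 1) / x^2) x :=
      (Real.hasDerivAt_arctan x).div (hasDerivAt_id x) (ne_of_gt hx)
    rw [hd.deriv]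
    apply div_neg_of_neg_of_pos _ (pow_pos hx' 2)
    have := div_lt_arctan hx
    have hx1 : 1 / (1 + x^2) * x = x / (1 + x^2) := by ring
    rw [hx1]
    linarith

lemma glog_contOn : ContinuousOn (fun x => Real.log ((1 + x) / (1 - x))) (Ico (0:ℝ) 1) :=
  fun x hx => (hasDerivAt_glog ⟨by linarith [hx.1], hx.2⟩).continuousAt.continuousWithinAt

lemma two_mul_lt_glog {x : ℝ} (hx : x ∈ Ioo (0:ℝ) 1) :
    2 * x < Real.log ((1 + x) / (1 - x)) := by
  have h : StrictMonoOn (fun x => Real.log ((1 + x) / (1 - x)) - 2 * x) (Ico 0 1) := by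
    apply strictMonoOn_of_deriv_pos (convex_Ico 0 1)
    · exact glog_contOn.sub ((continuous_const.mul continuous_id).continuousOn)
    · intro x hxx
      rw [interior_Ico] at hxx
      have hd := (hasDerivAt_glog (⟨by linarith [hxx.1], hxx.2⟩ : x ∈ Ioo (-1:ℝ) 1)).sub
        ((hasDerivAt_id' (x := x)).const_mul 2)
      rw [HasDerivAt.deriv (f := fun x => Real.log ((1 + x) / (1 - x)) - 2 * x) hd]
      have h1 : (0:ℝ) < 1 - x^2 := by nlinarith [hxx.1, hxx.2]
      have h2 : 1 - x^2 < 1 := by nlinarith [hxx.1]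
      have : 2 < 2 / (1 - x^2) := by
        rw [lt_div_iff₀ h1]; nlinarith
      linarith
  have := h (by constructor <;> [exact le_refl 0; norm_num] : (0:ℝ) ∈ Ico (0:ℝ) 1)
    ⟨le_of_lt hx.1, hx.2⟩ hx.1
  simp only [Real.log_one, add_zero, sub_zero, mul_zero, zero_sub] at this
  norm_num at this
  linarith

lemma glog_lt {x : ℝ} (hx : x ∈ Ioo (0:ℝ) 1) :
    Real.log ((1 + x) / (1 - x)) < 2 * x / (1 - x^2) := by
  have h : StrictMonoOn (fun x => 2 * x / (1 - x^2) - Real.log ((1 + x) / (1 - x))) (Ico 0 1) := by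
    apply strictMonoOn_of_deriv_pos (convex_Ico 0 1)
    · refine ContinuousOn.sub ?_ glog_contOn
      exact (continuous_const.mul continuous_id).continuousOn.div
        (by fun_prop) (fun y hy => by nlinarith [hy.1, hy.2])
    · intro x hxx
      rw [interior_Ico] at hxx
      have h1 : (1:ℝ) - x^2 ≠ 0 := by nlinarith [hxx.1, hxx.2]
      have d1 : HasDerivAt (fun x : ℝ => 2 * x / (1 - x^2))
          ((2 * (1 - x^2) - 2 * x * (-(2 * x))) / (1 - x^2)^2) x := by
        have d0 : HasDerivAt (fun x : ℝ => 2 * x) 2 x := by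
          simpa using (hasDerivAt_id' (x := x)).const_mul 2
        refine HasDerivAt.div d0 ?_ h1
        have := ((hasDerivAt_pow 2 x).const_sub 1)
        simpa using this
      have hd := d1.sub (hasDerivAt_glog (⟨by linarith [hxx.1], hxx.2⟩ : x ∈ Ioo (-1:ℝ) 1))
      have hd' : HasDerivAt (fun x => 2 * x / (1 - x^2) - Real.log ((1 + x) / (1 - x)))
          (4 * x^2 / (1 - x^2)^2) x := by
        refine hd.congr_deriv ?_
        field_simp
        ring
      rw [hd'.deriv]
      exact div_pos (by nlinarith [hxx.1]) (by positivity)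
  have := h (⟨le_refl 0, by norm_num⟩ : (0:ℝ) ∈ Ico (0:ℝ) 1) ⟨le_of_lt hx.1, hx.2⟩ hx.1
  simp only [mul_zero, zero_div, sub_zero, add_zero, Real.log_one] at this
  norm_num at this
  linarith

lemma glog_div_strictMono : StrictMonoOn (fun x => Real.log ((1 + x) / (1 - x)) / x) (Ioo (0:ℝ) 1) := by
  apply strictMonoOn_of_deriv_pos (convex_Ioo 0 1)
  · refine ContinuousOn.div (fun x hx => (glog_contOn x ⟨le_of_lt hx.1, hx.2⟩).mono Ioo_subset_Ico_self) continuousOn_id (fun x hx => ne_of_gt hx.1)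
  · intro x hx
    rw [interior_Ioo] at hx
    have hd : HasDerivAt (fun x => Real.log ((1 + x) / (1 - x)) / x)
        ((2 / (1 - x^2) * x - Real.log ((1 + x) / (1 - x)) * 1) / x^2) x :=
      (hasDerivAt_glog ⟨by linarith [hx.1], hx.2⟩).div (hasDerivAt_id' (x := x)) (ne_of_gt hx.1)
    rw [hd.deriv]
    apply div_pos _ (pow_pos hx.1 2)
    have := glog_lt hx
    have heq : 2 / (1 - x^2) * x = 2 * x / (1 - x^2) := by ring
    rw [heq]
    linarith

lemma kingmanF_neg {t : ℝ} (ht : t < 0) :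
    kingmanF t = 2 * (Real.arctan (Real.sqrt (-t)) / Real.sqrt (-t)) := by
  rw [kingmanF, if_neg (by linarith), if_neg (ne_of_lt ht), abs_of_neg ht]
  ring

lemma kingmanF_zero : kingmanF 0 = 2 := by simp [kingmanF]

lemma kingmanF_pos_eq {t : ℝ} (ht : 0 < t) :
    kingmanF t = Real.log ((1 + Real.sqrt t) / (1 - Real.sqrt t)) / Real.sqrt t := by
  rw [kingmanF, if_pos ht]; ring

lemma sqrt_neg_mem {t : ℝ} (ht : t < 0) : Real.sqrt (-t) ∈ Ioi (0:ℝ) :=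
  Real.sqrt_pos.mpr (by linarith)

lemma sqrt_mem_Ioo {t : ℝ} (ht : t ∈ Ioo (0:ℝ) 1) : Real.sqrt t ∈ Ioo (0:ℝ) 1 :=
  ⟨Real.sqrt_pos.mpr ht.1, by
    rw [show (1:ℝ) = Real.sqrt 1 by simp]
    exact Real.sqrt_lt_sqrt (le_of_lt ht.1) ht.2⟩

lemma kingmanF_neg_lt_two {t : ℝ} (ht : t < 0) : kingmanF t < 2 := by
  rw [kingmanF_neg ht]
  have hy := sqrt_neg_mem ht
  have h1 : Real.arctan (Real.sqrt (-t)) / Real.sqrt (-t) < 1 :=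
    (div_lt_one hy).mpr (arctan_lt_self' hy)
  linarith

lemma two_lt_kingmanF_pos {t : ℝ} (ht : t ∈ Ioo (0:ℝ) 1) : 2 < kingmanF t := by
  rw [kingmanF_pos_eq ht.1]
  have hx := sqrt_mem_Ioo ht
  have := two_mul_lt_glog hx
  rw [lt_div_iff₀ hx.1]
  linarith

lemma kingmanF_pos_of_lt_one {t : ℝ} (ht : t < 1) : 0 < kingmanF t := by
  rcases lt_trichotomy t 0 with h | h | h
  · rw [kingmanF_neg h]
    have hy := sqrt_neg_mem h
    exact mul_pos two_pos (div_pos ((by simpa using Real.arctan_strictMono hy : 0 < Real.arctan (Real.sqrt (-t)))) hy)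
  · rw [h, kingmanF_zero]; norm_num
  · exact lt_trans two_pos (two_lt_kingmanF_pos ⟨h, ht⟩)

lemma kingmanF_strictMono : StrictMonoOn kingmanF (Iio (1:ℝ)) := by
  intro s hs t ht hst
  rcases lt_trichotomy t 0 with ht0 | ht0 | ht0
  · -- both negative
    have hs0 : s < 0 := lt_trans hst ht0
    rw [kingmanF_neg hs0, kingmanF_neg ht0]
    have h := arctan_div_strictAnti (sqrt_neg_mem ht0) (sqrt_neg_mem hs0)
      (Real.sqrt_lt_sqrt (by linarith) (by linarith))
    simpa using (mul_lt_mul_of_pos_left h two_pos)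
  · rw [ht0, kingmanF_zero]
    exact kingmanF_neg_lt_two (ht0 ▸ hst)
  · rcases lt_trichotomy s 0 with hs0 | hs0 | hs0
    · exact lt_trans (kingmanF_neg_lt_two hs0) (two_lt_kingmanF_pos ⟨ht0, ht⟩)
    · rw [hs0, kingmanF_zero]
      exact two_lt_kingmanF_pos ⟨ht0, ht⟩
    · rw [kingmanF_pos_eq hs0, kingmanF_pos_eq ht0]
      exact glog_div_strictMono (sqrt_mem_Ioo ⟨hs0, lt_trans hst ht⟩) (sqrt_mem_Ioo ⟨ht0, ht⟩)
        (Real.sqrt_lt_sqrt (le_of_lt hs0) hst)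

lemma tendsto_sqrt_neg : Tendsto (fun t => Real.sqrt (-t)) (𝓝[<] (0:ℝ)) (𝓝[≠] 0) := by
  rw [tendsto_nhdsWithin_iff]
  constructor
  · have : Tendsto (fun t : ℝ => Real.sqrt (-t)) (𝓝 0) (𝓝 (Real.sqrt (-0))) :=
      (Real.continuous_sqrt.comp continuous_neg).tendsto 0
    simpa using this.mono_left nhdsWithin_le_nhds
  · filter_upwards [self_mem_nhdsWithin] with t (ht : t < 0)
    exact ne_of_gt (Real.sqrt_pos.mpr (by linarith))

lemma tendsto_sqrt_pos : Tendsto (fun t => Real.sqrt t) (𝓝[>] (0:ℝ)) (𝓝[≠] 0) := by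
  rw [tendsto_nhdsWithin_iff]
  constructor
  · have : Tendsto (fun t : ℝ => Real.sqrt t) (𝓝 0) (𝓝 (Real.sqrt 0)) :=
      Real.continuous_sqrt.tendsto 0
    simpa using this.mono_left nhdsWithin_le_nhds
  · filter_upwards [self_mem_nhdsWithin] with t (ht : 0 < t)
    exact ne_of_gt (Real.sqrt_pos.mpr ht)

lemma tendsto_arctan_div : Tendsto (fun y => Real.arctan y / y) (𝓝[≠] (0:ℝ)) (𝓝 1) := by
  have h := hasDerivAt_iff_tendsto_slope.mp (by simpa using Real.hasDerivAt_arctan 0)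
  refine h.congr (fun y => ?_)
  simp [slope_def_field]

lemma tendsto_glog_div :
    Tendsto (fun y => Real.log ((1 + y) / (1 - y)) / y) (𝓝[≠] (0:ℝ)) (𝓝 2) := by
  have h := hasDerivAt_iff_tendsto_slope.mp
    (by simpa using hasDerivAt_glog (by norm_num : (0:ℝ) ∈ Ioo (-1:ℝ) 1))
  refine h.congr (fun y => ?_)
  simp [slope_def_field]

lemma continuousAt_kingmanF_zero : ContinuousAt kingmanF 0 := by
  rw [ContinuousAt, kingmanF_zero]
  rw [← nhdsNE_sup_pure (0:ℝ), tendsto_sup]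
  constructor
  · rw [← nhdsLT_sup_nhdsGT, tendsto_sup]
    constructor
    · have hcomp : Tendsto (fun t => 2 * (Real.arctan (Real.sqrt (-t)) / Real.sqrt (-t)))
          (𝓝[<] (0:ℝ)) (𝓝 2) := by
        have := (tendsto_arctan_div.comp tendsto_sqrt_neg).const_mul 2
        simpa [Function.comp] using this
      refine Tendsto.congr' ?_ hcomp
      filter_upwards [self_mem_nhdsWithin] with t (ht : t < 0)
      exact (kingmanF_neg ht).symm
    · have hcomp : Tendsto
          (fun t => Real.log ((1 + Real.sqrt t) / (1 - Real.sqrt t)) / Real.sqrt t)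
          (𝓝[>] (0:ℝ)) (𝓝 2) := by
        have := tendsto_glog_div.comp tendsto_sqrt_pos
        exact this
      refine Tendsto.congr' ?_ hcomp
      filter_upwards [self_mem_nhdsWithin] with t (ht : 0 < t)
      exact (kingmanF_pos_eq ht).symm
  · simpa [kingmanF_zero] using tendsto_pure_nhds kingmanF 0

lemma kingmanF_continuousOn : ContinuousOn kingmanF (Iio (1:ℝ)) := by
  intro t ht
  rcases lt_trichotomy t 0 with ht0 | ht0 | ht0
  · apply ContinuousAt.continuousWithinAt
    have hev : kingmanF =ᶠ[𝓝 t] fun t => 2 * (Real.arctan (Real.sqrt (-t)) / Real.sqrt (-t)) := by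
      filter_upwards [Iio_mem_nhds ht0] with s (hs : s < 0)
      exact kingmanF_neg hs
    rw [continuousAt_congr hev]
    have hne : Real.sqrt (-t) ≠ 0 := ne_of_gt (Real.sqrt_pos.mpr (by linarith))
    have hc : Continuous fun t : ℝ => Real.sqrt (-t) :=
      Real.continuous_sqrt.comp continuous_neg
    exact continuousAt_const.mul
      (((Real.continuous_arctan.comp hc).continuousAt).div hc.continuousAt hne)
  · exact (ht0 ▸ continuousAt_kingmanF_zero).continuousWithinAt
  · apply ContinuousAt.continuousWithinAt
    have hev : kingmanF =ᶠ[𝓝 t]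
        fun t => Real.log ((1 + Real.sqrt t) / (1 - Real.sqrt t)) / Real.sqrt t := by
      filter_upwards [Ioi_mem_nhds ht0] with s (hs : 0 < s)
      exact kingmanF_pos_eq hs
    rw [continuousAt_congr hev]
    have hx := sqrt_mem_Ioo ⟨ht0, ht⟩
    have h1 : Real.sqrt t ≠ 0 := ne_of_gt hx.1
    have h2 : (1:ℝ) - Real.sqrt t ≠ 0 := by
      have := hx.2; intro h; linarith [sub_eq_zero.mp h]
    have h3 : (1 + Real.sqrt t) / (1 - Real.sqrt t) ≠ 0 := by
      apply div_ne_zero _ h2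
      have := hx.1; intro h; linarith
    apply ContinuousAt.div _ (Real.continuous_sqrt.continuousAt) h1
    exact ContinuousAt.log ((continuousAt_const.add Real.continuous_sqrt.continuousAt).div
      (continuousAt_const.sub Real.continuous_sqrt.continuousAt) h2) h3

lemma kingmanF_image : kingmanF '' (Iio 1) = Ioi 0 := by
  apply Subset.antisymm
  · rintro _ ⟨t, ht, rfl⟩
    exact kingmanF_pos_of_lt_one ht
  · intro y hy
    have hy0 : (0:ℝ) < y := hy
    -- the large point b
    set x : ℝ := 1 - Real.exp (-y) / 2 with hxdef
    have hexp1 : Real.exp (-y) < 1 := by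
      rw [Real.exp_lt_one_iff]; linarith
    have hexp0 : 0 < Real.exp (-y) := Real.exp_pos _
    have hx1 : 0 < x := by simp only [hxdef]; linarith
    have hx2 : x < 1 := by simp only [hxdef]; linarith
    set b : ℝ := x ^ 2 with hbdef
    have hb : b ∈ Ioo (0:ℝ) 1 := ⟨by positivity, by nlinarith⟩
    have hsb : Real.sqrt b = x := Real.sqrt_sq hx1.le
    have hgx : y < Real.log ((1 + x) / (1 - x)) := by
      have h1x : 0 < 1 - x := by linarith
      have hle : 1 / (1 - x) ≤ (1 + x) / (1 - x) := by
        gcongr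
        linarith
      have hlog : Real.log (1 / (1 - x)) ≤ Real.log ((1 + x) / (1 - x)) :=
        Real.log_le_log (by positivity) hle
      have hval : Real.log (1 / (1 - x)) = y + Real.log 2 := by
        rw [Real.log_div one_ne_zero (ne_of_gt h1x), Real.log_one]
        have : (1:ℝ) - x = Real.exp (-y) / 2 := by simp [hxdef]
        rw [this, Real.log_div (ne_of_gt hexp0) two_ne_zero, Real.log_exp]
        ring
      have h2 : (0:ℝ) < Real.log 2 := Real.log_pos (by norm_num)
      linarith
    have hfb : y < kingmanF b := by
      rw [kingmanF_pos_eq hb.1, hsb]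
      have hg0 : 0 < Real.log ((1 + x) / (1 - x)) := by linarith
      have : Real.log ((1 + x) / (1 - x)) ≤ Real.log ((1 + x) / (1 - x)) / x := by
        rw [le_div_iff₀ hx1]
        nlinarith
      linarith
    -- the small point a
    set a : ℝ := -((π / y) ^ 2) - 1 with hadef
    have hπy : 0 < π / y := div_pos Real.pi_pos hy0
    have ha0 : a < 0 := by simp only [hadef]; nlinarith
    have hu : π / y < Real.sqrt (-a) := by
      have : -a = (π / y) ^ 2 + 1 := by simp [hadef]; ring
      rw [this]
      calc π / y = Real.sqrt ((π / y) ^ 2) := (Real.sqrt_sq hπy.le).symm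
        _ < Real.sqrt ((π / y) ^ 2 + 1) := Real.sqrt_lt_sqrt (by positivity) (by linarith)
    have hfa : kingmanF a < y := by
      rw [kingmanF_neg ha0]
      have hu0 : 0 < Real.sqrt (-a) := lt_trans hπy hu
      have harc : Real.arctan (Real.sqrt (-a)) < π / 2 := Real.arctan_lt_pi_div_two _
      have h1 : 2 * (Real.arctan (Real.sqrt (-a)) / Real.sqrt (-a)) < π / Real.sqrt (-a) := by
        rw [mul_div_assoc', div_lt_div_iff_of_pos_right hu0]
        linarith
      have h2 : π / Real.sqrt (-a) < y := by
        rw [div_lt_iff₀ hu0]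
        have : π = (π / y) * y := by field_simp
        nlinarith
      linarith
    have hab : a ≤ b := le_of_lt (lt_trans ha0 hb.1)
    have hsub : Icc a b ⊆ Iio (1:ℝ) := fun z hz => lt_of_le_of_lt hz.2 hb.2
    have hmem : y ∈ Icc (kingmanF a) (kingmanF b) := ⟨le_of_lt hfa, le_of_lt hfb⟩
    have := intermediate_value_Icc hab (kingmanF_continuousOn.mono hsub)
    obtain ⟨c, hc, hcy⟩ := this hmem
    exact ⟨c, hsub hc, hcy⟩

/-- `f` is continuous and strictly increasing on `(-∞,1)` with range `(0,∞)`. -/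
theorem kingmanF_continuous_strictMono_range :
    ContinuousOn kingmanF (Iio 1) ∧ StrictMonoOn kingmanF (Iio 1) ∧
      kingmanF '' (Iio 1) = Ioi 0 :=
  ⟨kingmanF_continuousOn, kingmanF_strictMono, kingmanF_image⟩
end

section
/- Define Λ(t) = -∫₁^∞ log(1 - 2t/x²) dx for t ≤ 1/2 and Λ(t) = ∞ for t > 1/2. Then Λ is differentiable on (-∞,1/2) with Λ'(t) = ∫₁^∞ 2/(x² - 2t) dx, and Λ'(tₙ) → ∞ for any sequence tₙ ↑ 1/2 (i.e., Λ is steep). -/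
open Real Set MeasureTheory Filter

lemma rpow_neg_two_eq {x : ℝ} (hx : 0 < x) : x ^ (-2 : ℝ) = (x ^ 2)⁻¹ := by
  rw [show (-2 : ℝ) = ((-2 : ℤ) : ℝ) by norm_num, Real.rpow_intCast, zpow_neg]
  norm_cast

lemma aux_int {c : ℝ} (hc : c < 1) :
    IntegrableOn (fun x : ℝ => 2 / (x ^ 2 - c)) (Ioi 1) := by
  have base : IntegrableOn (fun x : ℝ => 2 / (1 - max c 0) * x ^ (-2 : ℝ)) (Ioi 1) :=
    (integrableOn_Ioi_rpow_of_lt (by norm_num) one_pos).const_mul _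
  have hc' : max c 0 < 1 := max_lt hc one_pos
  have hc0 : 0 ≤ max c 0 := le_max_right _ _
  refine Integrable.mono' base (Measurable.aestronglyMeasurable (by measurability)) ?_
  filter_upwards [ae_restrict_mem measurableSet_Ioi] with x hx
  have hx1 : (1 : ℝ) < x := hx
  have hx2 : (1 : ℝ) < x ^ 2 := by nlinarith
  have hpos : 0 < x ^ 2 - c := by nlinarith
  have key : (1 - max c 0) * x ^ 2 ≤ x ^ 2 - c := by
    rcases le_or_gt c 0 with h | h
    · simp only [max_eq_right h] at *; nlinarith
    · simp only [max_eq_left h.le] at *; nlinarith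
  rw [Real.norm_eq_abs, abs_of_nonneg (by positivity), rpow_neg_two_eq (by linarith),
    show 2 / (1 - max c 0) * (x ^ 2)⁻¹ = 2 / ((1 - max c 0) * x ^ 2) by rw [← div_eq_mul_inv, div_div]]
  gcongr

lemma aux_log_int {t : ℝ} (ht : t < 1 / 2) :
    IntegrableOn (fun x : ℝ => Real.log (1 - 2 * t / x ^ 2)) (Ioi 1) := by
  set δ : ℝ := min 1 (1 - 2 * t) with hδ
  have hδpos : 0 < δ := lt_min one_pos (by linarith)
  have hδ1 : δ ≤ 1 := min_le_left _ _
  have base : IntegrableOn (fun x : ℝ => 2 * |t| / δ * x ^ (-2 : ℝ)) (Ioi 1) :=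
    (integrableOn_Ioi_rpow_of_lt (by norm_num) one_pos).const_mul _
  refine Integrable.mono' base (Measurable.aestronglyMeasurable (by measurability)) ?_
  filter_upwards [ae_restrict_mem measurableSet_Ioi] with x hx
  have hx1 : (1 : ℝ) < x := hx
  have hx2 : (1 : ℝ) < x ^ 2 := by nlinarith
  have hx2' : (0 : ℝ) < x ^ 2 := by linarith
  set y : ℝ := 1 - 2 * t / x ^ 2 with hy
  have hyδ : δ ≤ y := by
    rcases le_or_gt t 0 with h | h
    · have : 2 * t / x ^ 2 ≤ 0 := div_nonpos_iff.2 (Or.inr ⟨by linarith, hx2'.le⟩)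
      have : (1 : ℝ) ≤ y := by rw [hy]; linarith
      linarith [min_le_left (1:ℝ) (1 - 2*t)]
    · have h1 : 2 * t / x ^ 2 ≤ 2 * t := by
        rw [div_le_iff₀ hx2']; nlinarith
      have : 1 - 2 * t ≤ y := by rw [hy]; linarith
      linarith [min_le_right (1:ℝ) (1 - 2*t)]
  have hypos : 0 < y := lt_of_lt_of_le hδpos hyδ
  rw [Real.norm_eq_abs, rpow_neg_two_eq (by linarith),
    show 2 * |t| / δ * (x ^ 2)⁻¹ = 2 * |t| / δ / x ^ 2 by rw [← div_eq_mul_inv]]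
  rcases le_or_gt 1 y with h1 | h1
  · rw [abs_of_nonneg (Real.log_nonneg h1)]
    have hlog : Real.log y ≤ y - 1 := by
      linarith [Real.log_le_sub_one_of_pos hypos]
    have hy1 : y - 1 = -(2 * t) / x ^ 2 := by rw [hy]; ring
    rw [hy1] at hlog
    refine hlog.trans ?_
    gcongr
    calc -(2 * t) ≤ |2 * t| := neg_le_abs _
      _ = 2 * |t| := by rw [abs_mul]; norm_num
      _ ≤ 2 * |t| / δ := by
          rw [le_div_iff₀ hδpos]; nlinarith [abs_nonneg t]
  · rw [abs_of_neg (Real.log_neg hypos h1), ← Real.log_inv]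
    have hlog : Real.log y⁻¹ ≤ y⁻¹ - 1 :=
      by linarith [Real.log_le_sub_one_of_pos (inv_pos.2 hypos)]
    refine hlog.trans ?_
    have he : y⁻¹ - 1 = (1 - y) / y := by field_simp
    have h1y : 1 - y = 2 * t / x ^ 2 := by rw [hy]; ring
    have ht0 : 0 < t := by
      by_contra h
      push_neg at h
      have : 2 * t / x ^ 2 ≤ 0 := div_nonpos_iff.2 (Or.inr ⟨by linarith, hx2'.le⟩)
      rw [hy] at h1; linarith
    rw [he, h1y]
    calc 2 * t / x ^ 2 / y ≤ 2 * t / x ^ 2 / δ := by gcongr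
      _ = 2 * t / δ / x ^ 2 := by ring
      _ ≤ 2 * |t| / δ / x ^ 2 := by
          gcongr
          exact le_abs_self t

lemma part1 (t : ℝ) (ht : t < 1 / 2) :
    HasDerivAt (fun s : ℝ => -∫ x in Ioi (1:ℝ), Real.log (1 - 2 * s / x ^ 2))
      (∫ x in Ioi (1:ℝ), 2 / (x ^ 2 - 2 * t)) t := by
  set ε : ℝ := (1 / 2 - t) / 2 with hε
  have hεpos : 0 < ε := by rw [hε]; linarith
  set b : ℝ := t + ε with hb
  have hb2 : 2 * b < 1 := by rw [hb, hε]; linarith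
  have key := hasDerivAt_integral_of_dominated_loc_of_deriv_le (μ := volume.restrict (Ioi 1))
    (F := fun s x => Real.log (1 - 2 * s / x ^ 2))
    (F' := fun s x => -(2 / (x ^ 2 - 2 * s)))
    (bound := fun x => 2 / (x ^ 2 - 2 * b)) (Metric.ball_mem_nhds t hεpos)
    (Filter.Eventually.of_forall fun s => Measurable.aestronglyMeasurable (by measurability))
    (aux_log_int ht)
    (Measurable.aestronglyMeasurable (by measurability))
    ?_ (aux_int (by linarith)) ?_
  · have h2 := key.2
    have hneg : HasDerivAt (fun s : ℝ => -∫ x in Ioi (1:ℝ), Real.log (1 - 2 * s / x ^ 2))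
        (-∫ x in Ioi (1:ℝ), -(2 / (x ^ 2 - 2 * t))) t := h2.neg
    rwa [integral_neg, neg_neg] at hneg
  · -- bound
    filter_upwards [ae_restrict_mem measurableSet_Ioi] with x hx s hs
    have hx1 : (1 : ℝ) < x := hx
    have hsb : s < b := by
      have := abs_lt.1 (mem_ball_iff_norm.1 hs)
      rw [hb]; linarith [this.2]
    have hpos : 0 < x ^ 2 - 2 * s := by nlinarith
    have hposb : 0 < x ^ 2 - 2 * b := by nlinarith
    rw [norm_neg, Real.norm_eq_abs, abs_of_nonneg (by positivity)]
    gcongr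
  · -- differentiability
    filter_upwards [ae_restrict_mem measurableSet_Ioi] with x hx s hs
    have hx1 : (1 : ℝ) < x := hx
    have hsb : s < b := by
      have := abs_lt.1 (mem_ball_iff_norm.1 hs)
      rw [hb]; linarith [this.2]
    have hx2 : (0 : ℝ) < x ^ 2 := by nlinarith
    have hpos : 0 < x ^ 2 - 2 * s := by nlinarith
    have hypos : 0 < 1 - 2 * s / x ^ 2 := by
      rw [sub_pos, div_lt_one hx2]; linarith
    have inner : HasDerivAt (fun s : ℝ => 1 - 2 * s / x ^ 2) (-(2 / x ^ 2)) s := by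
      have : HasDerivAt (fun s : ℝ => 2 * s / x ^ 2) (2 / x ^ 2) s := by
        simpa using (((hasDerivAt_id s).const_mul 2).div_const (x ^ 2))
      simpa using this.const_sub 1
    have hlog := inner.log (ne_of_gt hypos)
    refine hlog.congr_deriv ?_
    have h1 : x ^ 2 ≠ 0 := ne_of_gt hx2
    have h2 : (1 - 2 * s / x ^ 2) ≠ 0 := ne_of_gt hypos
    have h3 : x ^ 2 - 2 * s ≠ 0 := ne_of_gt hpos
    field_simp

lemma part2_calc {ε : ℝ} (hε : 0 < ε) :
    ∫ x in Ioc (1:ℝ) 2, 2 / (3 * (x - 1) + ε)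
      = 2 / 3 * Real.log (3 + ε) - 2 / 3 * Real.log ε := by
  rw [← intervalIntegral.integral_of_le (by norm_num : (1:ℝ) ≤ 2)]
  have hderiv : ∀ x ∈ uIcc (1:ℝ) 2,
      HasDerivAt (fun x : ℝ => 2 / 3 * Real.log (3 * (x - 1) + ε))
        (2 / (3 * (x - 1) + ε)) x := by
    intro x hx
    rw [uIcc_of_le (by norm_num)] at hx
    have hxpos : 0 < 3 * (x - 1) + ε := by
      have := hx.1; nlinarith
    have inner : HasDerivAt (fun x : ℝ => 3 * (x - 1) + ε) 3 x := by
      simpa using (((hasDerivAt_id x).sub_const 1).const_mul 3).add_const ε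
    have hlog := inner.log (ne_of_gt hxpos)
    have := hlog.const_mul (2 / 3)
    refine this.congr_deriv ?_
    field_simp
  have hint : IntervalIntegrable (fun x : ℝ => 2 / (3 * (x - 1) + ε)) volume 1 2 := by
    apply ContinuousOn.intervalIntegrable
    apply ContinuousOn.div continuousOn_const
    · fun_prop
    · intro x hx
      rw [uIcc_of_le (by norm_num)] at hx
      have := hx.1; nlinarith
  rw [intervalIntegral.integral_eq_sub_of_hasDerivAt hderiv hint]
  norm_num

lemma part2_bound {t : ℝ} (ht : t < 1 / 2) :
    2 / 3 * Real.log (3 + (1 - 2 * t)) - 2 / 3 * Real.log (1 - 2 * t)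
      ≤ ∫ x in Ioi (1:ℝ), 2 / (x ^ 2 - 2 * t) := by
  have hε : 0 < 1 - 2 * t := by linarith
  have hint2 : IntegrableOn (fun x : ℝ => 2 / (x ^ 2 - 2 * t)) (Ioi 1) :=
    aux_int (by linarith)
  have hintIoc : IntegrableOn (fun x : ℝ => 2 / (x ^ 2 - 2 * t)) (Ioc 1 2) :=
    hint2.mono_set fun x hx => hx.1
  have hintIoc1 : IntegrableOn (fun x : ℝ => 2 / (3 * (x - 1) + (1 - 2 * t))) (Ioc 1 2) := by
    apply IntegrableOn.mono_set _ Ioc_subset_Icc_self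
    apply ContinuousOn.integrableOn_Icc
    apply ContinuousOn.div continuousOn_const
    · fun_prop
    · intro x hx
      have := hx.1; nlinarith
  calc 2 / 3 * Real.log (3 + (1 - 2 * t)) - 2 / 3 * Real.log (1 - 2 * t)
      = ∫ x in Ioc (1:ℝ) 2, 2 / (3 * (x - 1) + (1 - 2 * t)) := (part2_calc hε).symm
    _ ≤ ∫ x in Ioc (1:ℝ) 2, 2 / (x ^ 2 - 2 * t) := by
        apply setIntegral_mono_on hintIoc1 hintIoc measurableSet_Ioc
        intro x hx
        have hx1 : 1 < x := hx.1
        have hx2 : x ≤ 2 := hx.2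
        have h1 : 0 < x ^ 2 - 2 * t := by nlinarith
        gcongr
        nlinarith
    _ ≤ ∫ x in Ioi (1:ℝ), 2 / (x ^ 2 - 2 * t) := by
        apply setIntegral_mono_set hint2
        · filter_upwards [ae_restrict_mem measurableSet_Ioi] with x hx
          have hx1 : (1:ℝ) < x := hx
          have : 0 < x ^ 2 - 2 * t := by nlinarith
          positivity
        · exact HasSubset.Subset.eventuallyLE fun x hx => hx.1

/-- The limiting log-mgf `Λ(t) = -∫₁^∞ log(1 - 2t/x²) dx` (for `t ≤ 1/2`, and `∞` for
`t > 1/2`) is differentiable on `(-∞, 1/2)` with `Λ'(t) = ∫₁^∞ 2/(x² - 2t) dx`, and it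
is steep: `Λ'(tₙ) → ∞` whenever `tₙ < 1/2` and `tₙ → 1/2`. -/
theorem kingman_Lambda_differentiable_steep :
    (∀ t : ℝ, t < 1 / 2 →
      HasDerivAt (fun s : ℝ => -∫ x in Ioi (1:ℝ), Real.log (1 - 2 * s / x ^ 2))
        (∫ x in Ioi (1:ℝ), 2 / (x ^ 2 - 2 * t)) t) ∧
    (∀ u : ℕ → ℝ, (∀ n, u n < 1 / 2) → Tendsto u atTop (nhds (1 / 2)) →
      Tendsto (fun n => ∫ x in Ioi (1:ℝ), 2 / (x ^ 2 - 2 * u n)) atTop atTop) := by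
  constructor
  · exact part1
  · intro u hu hlim
    have hεn : ∀ n, 0 < 1 - 2 * u n := fun n => by linarith [hu n]
    have hε0 : Tendsto (fun n => 1 - 2 * u n) atTop (nhds 0) := by
      have h := (tendsto_const_nhds (x := (1:ℝ)) (f := atTop)).sub (hlim.const_mul 2)
      simpa using h
    have hεw : Tendsto (fun n => 1 - 2 * u n) atTop (nhdsWithin 0 (Ioi 0)) :=
      tendsto_nhdsWithin_iff.2 ⟨hε0, Filter.Eventually.of_forall fun n => hεn n⟩
    have hlog : Tendsto (fun n => Real.log (1 - 2 * u n)) atTop atBot :=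
      Real.tendsto_log_nhdsGT_zero.comp hεw
    have hlog3 : Tendsto (fun n => Real.log (3 + (1 - 2 * u n))) atTop
        (nhds (Real.log 3)) := by
      apply (Real.continuousAt_log (by norm_num)).tendsto.comp
      have := tendsto_const_nhds (x := (3:ℝ)) (f := atTop) |>.add hε0
      simpa using this
    have hbot : Tendsto (fun n => -(2 / 3 * Real.log (1 - 2 * u n))) atTop atTop :=
      tendsto_neg_atTop_iff.2 (Tendsto.const_mul_atBot (by norm_num : (0:ℝ) < 2 / 3) hlog)
    have hmain := hbot.atTop_add (hlog3.const_mul (2 / 3 : ℝ))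
    refine tendsto_atTop_mono (fun n => part2_bound (hu n))
      (Tendsto.congr (fun n => by ring) hmain)
end

section
/- For each x > 0 there is a unique t_x < 1 with f(t_x) = x, where f(t) = (1/√t)·log((1+√t)/(1-√t)) for 0<t<1, f(0)=2, f(t) = (2/√|t|)·arctan(√|t|) for t<0. Moreover, the supremum sup_{t ≤ 1} [ (t/2)·x + ∫₁^∞ log(1 - t/y²) dy ] is attained at t = t_x. -/
open Real Set MeasureTheory Filter Topology

lemma kingman_key (t : ℝ) (ht : t < 1) :
    IntegrableOn (fun y : ℝ => (y ^ 2 - t)⁻¹) (Ioi 1) ∧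
    ∫ y in Ioi (1:ℝ), (y ^ 2 - t)⁻¹ = kingmanF t / 2 := by
  rcases lt_trichotomy t 0 with h0 | h0 | h0
  · -- t < 0, antiderivative c⁻¹ * arctan (y / c), c = sqrt (-t)
    set c : ℝ := Real.sqrt (-t) with hc
    have hcpos : 0 < c := Real.sqrt_pos.2 (by linarith)
    have hc2 : c ^ 2 = -t := Real.sq_sqrt (by linarith)
    have hderiv : ∀ y ∈ Ici (1:ℝ),
        HasDerivAt (fun y : ℝ => c⁻¹ * Real.arctan (y / c)) ((y ^ 2 - t)⁻¹) y := by
      intro y _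
      have h1 : HasDerivAt (fun y : ℝ => y / c) (1 / c) y := by
        simpa using (hasDerivAt_id y).div_const c
      have h2 := (Real.hasDerivAt_arctan (y / c)).comp y h1
      have h3 := h2.const_mul c⁻¹
      refine h3.congr_deriv ?_
      have : y ^ 2 - t = c ^ 2 + y ^ 2 := by rw [hc2]; ring
      rw [this]
      field_simp
    have htend : Tendsto (fun y : ℝ => c⁻¹ * Real.arctan (y / c)) atTop
        (𝓝 (c⁻¹ * (π / 2))) := by
      have h1 : Tendsto (fun y : ℝ => y / c) atTop atTop :=
        tendsto_id.atTop_div_const hcpos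
      have h2 : Tendsto (fun y : ℝ => Real.arctan (y / c)) atTop (𝓝 (π / 2)) :=
        (Real.tendsto_arctan_atTop.mono_right nhdsWithin_le_nhds).comp h1
      exact h2.const_mul _
    have hpos : ∀ y ∈ Ioi (1:ℝ), 0 ≤ (y ^ 2 - t)⁻¹ := by
      intro y hy
      have : (0:ℝ) < y ^ 2 - t := by nlinarith [hy.out]
      positivity
    refine ⟨integrableOn_Ioi_deriv_of_nonneg' hderiv hpos htend, ?_⟩
    rw [integral_Ioi_of_hasDerivAt_of_nonneg' hderiv hpos htend]
    have harc : Real.arctan ((1:ℝ) / c) = π / 2 - Real.arctan c := by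
      rw [one_div]; exact Real.arctan_inv_of_pos hcpos
    have : kingmanF t = (2 / c) * Real.arctan c := by
      rw [kingmanF, if_neg (by linarith), if_neg (by linarith), abs_of_neg h0]
    rw [this, harc]
    field_simp
    ring
  · -- t = 0
    subst h0
    have hderiv : ∀ y ∈ Ici (1:ℝ),
        HasDerivAt (fun y : ℝ => -(y⁻¹)) ((y ^ 2 - 0)⁻¹) y := by
      intro y hy
      have hy0 : y ≠ 0 := by have := hy.out; linarith
      simpa using (hasDerivAt_inv hy0).fun_neg
    have htend : Tendsto (fun y : ℝ => -(y⁻¹)) atTop (𝓝 (-0 : ℝ)) :=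
      tendsto_inv_atTop_zero.neg
    have hpos : ∀ y ∈ Ioi (1:ℝ), 0 ≤ (y ^ 2 - 0)⁻¹ := by
      intro y hy; simp only [sub_zero]; positivity
    refine ⟨integrableOn_Ioi_deriv_of_nonneg' hderiv hpos htend, ?_⟩
    rw [integral_Ioi_of_hasDerivAt_of_nonneg' hderiv hpos htend]
    norm_num [kingmanF]
  · -- 0 < t < 1
    set c : ℝ := Real.sqrt t with hc
    have hcpos : 0 < c := Real.sqrt_pos.2 h0
    have hc2 : c ^ 2 = t := Real.sq_sqrt h0.le
    have hc1 : c < 1 := by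
      nlinarith [Real.sqrt_nonneg t, hc2]
    have hderiv : ∀ y ∈ Ici (1:ℝ),
        HasDerivAt (fun y : ℝ => (2 * c)⁻¹ * (Real.log (y - c) - Real.log (y + c)))
          ((y ^ 2 - t)⁻¹) y := by
      intro y hy
      have hy1 : (1:ℝ) ≤ y := hy.out
      have hyc : y - c ≠ 0 := by nlinarith
      have hyc' : y + c ≠ 0 := by nlinarith
      have h1 : HasDerivAt (fun y : ℝ => Real.log (y - c)) ((y - c)⁻¹) y := by
        simpa [Function.comp_def] using (Real.hasDerivAt_log hyc).comp y ((hasDerivAt_id y).sub_const c)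
      have h2 : HasDerivAt (fun y : ℝ => Real.log (y + c)) ((y + c)⁻¹) y := by
        simpa [Function.comp_def] using (Real.hasDerivAt_log hyc').comp y ((hasDerivAt_id y).add_const c)
      have h3 := ((h1.sub h2).const_mul ((2*c)⁻¹))
      refine h3.congr_deriv ?_
      have hy2 : y ^ 2 - t = (y - c) * (y + c) := by rw [← hc2]; ring
      rw [hy2]
      field_simp
      ring
    have htend : Tendsto (fun y : ℝ => (2 * c)⁻¹ * (Real.log (y - c) - Real.log (y + c)))
        atTop (𝓝 ((2 * c)⁻¹ * 0)) := by
      apply Tendsto.const_mul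
      have h1 : Tendsto (fun y : ℝ => 1 - 2 * c / (y + c)) atTop (𝓝 (1 - 0)) := by
        apply tendsto_const_nhds.sub
        exact tendsto_const_nhds.div_atTop (tendsto_atTop_add_const_right _ c tendsto_id)
      have h2 : Tendsto (fun y : ℝ => Real.log (1 - 2 * c / (y + c))) atTop (𝓝 0) := by
        have := (Real.continuousAt_log (by norm_num : (1:ℝ) ≠ 0)).tendsto.comp
          (by simpa using h1)
        simpa [Function.comp_def] using this
      apply h2.congr'
      filter_upwards [eventually_gt_atTop c] with y hy
      have hyc : y - c ≠ 0 := by linarith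
      have hyc' : (0:ℝ) < y + c := by linarith
      have : 1 - 2 * c / (y + c) = (y - c) / (y + c) := by field_simp; ring
      rw [this, Real.log_div hyc (by linarith)]
    have hpos : ∀ y ∈ Ioi (1:ℝ), 0 ≤ (y ^ 2 - t)⁻¹ := by
      intro y hy
      have : (0:ℝ) < y ^ 2 - t := by nlinarith [hy.out]
      positivity
    refine ⟨integrableOn_Ioi_deriv_of_nonneg' hderiv hpos htend, ?_⟩
    rw [integral_Ioi_of_hasDerivAt_of_nonneg' hderiv hpos htend]
    have : kingmanF t = (1 / c) * Real.log ((1 + c) / (1 - c)) := by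
      rw [kingmanF, if_pos h0]
    rw [this, Real.log_div (by linarith) (by linarith)]
    field_simp
    ring

lemma kingmanF_strict_mono {s t : ℝ} (hst : s < t) (ht : t < 1) :
    kingmanF s < kingmanF t := by
  have hs : s < 1 := hst.trans ht
  have Ks := kingman_key s hs
  have Kt := kingman_key t ht
  have key : (0:ℝ) < ∫ y in Ioi (1:ℝ), ((y ^ 2 - t)⁻¹ - (y ^ 2 - s)⁻¹) := by
    have hint : IntegrableOn (fun y : ℝ => (y ^ 2 - t)⁻¹ - (y ^ 2 - s)⁻¹) (Ioi 1) :=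
      Kt.1.sub Ks.1
    have hposf : ∀ y ∈ Ioi (1:ℝ), 0 < (y ^ 2 - t)⁻¹ - (y ^ 2 - s)⁻¹ := by
      intro y hy
      have hy1 : (1:ℝ) < y := hy
      have h1 : (0:ℝ) < y ^ 2 - t := by nlinarith
      have h2 : (0:ℝ) < y ^ 2 - s := by nlinarith
      have h3 : y ^ 2 - t < y ^ 2 - s := by linarith
      have := one_div_lt_one_div_of_lt h1 h3
      simpa [one_div] using sub_pos.2 this
    rw [setIntegral_pos_iff_support_of_nonneg_ae _ hint]
    · have hsub : Ioi (1:ℝ) ⊆ Function.support (fun y : ℝ => (y ^ 2 - t)⁻¹ - (y ^ 2 - s)⁻¹)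
          ∩ Ioi 1 := by
        intro y hy
        exact ⟨fun h => (hposf y hy).ne' h, hy⟩
      refine lt_of_lt_of_le ?_ (measure_mono hsub)
      simp
    · exact (ae_restrict_iff' measurableSet_Ioi).2 (ae_of_all _ fun y hy => (hposf y hy).le)
  have : ∫ y in Ioi (1:ℝ), ((y ^ 2 - t)⁻¹ - (y ^ 2 - s)⁻¹)
      = kingmanF t / 2 - kingmanF s / 2 := by
    rw [integral_sub Kt.1 Ks.1, Kt.2, Ks.2]
  rw [this] at key
  linarith

lemma kingmanInt_continuousAt {t₀ : ℝ} (ht₀ : t₀ < 1) :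
    ContinuousAt (fun t : ℝ => ∫ y in Ioi (1:ℝ), (y ^ 2 - t)⁻¹) t₀ := by
  set m : ℝ := (1 + t₀) / 2 with hm
  have hm1 : m < 1 := by rw [hm]; linarith
  have ht₀m : t₀ < m := by rw [hm]; linarith
  have hnhds : ∀ᶠ t in 𝓝 t₀, t ∈ Iio m := Iio_mem_nhds ht₀m
  apply MeasureTheory.continuousAt_of_dominated (bound := fun y => (y ^ 2 - m)⁻¹)
  · filter_upwards [hnhds] with t htm
    exact ((kingman_key t (htm.out.trans hm1)).1).aestronglyMeasurable
  · filter_upwards [hnhds] with t htm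
    rw [ae_restrict_iff' measurableSet_Ioi]
    apply ae_of_all
    intro y hy
    have hy1 : (1:ℝ) < y := hy
    have h1 : (0:ℝ) < y ^ 2 - m := by nlinarith
    have h2 : (0:ℝ) < y ^ 2 - t := by nlinarith [htm.out]
    rw [Real.norm_eq_abs, abs_of_pos (by positivity)]
    exact inv_anti₀ h1 (by linarith [htm.out])
  · exact (kingman_key m hm1).1
  · rw [ae_restrict_iff' measurableSet_Ioi]
    apply ae_of_all
    intro y hy
    have hy1 : (1:ℝ) < y := hy
    have : y ^ 2 - t₀ ≠ 0 := by nlinarith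
    exact ((continuous_const.sub continuous_id).continuousAt).inv₀ (by simpa using this)

lemma kingman_exists (x : ℝ) (hx : 0 < x) : ∃ t : ℝ, t < 1 ∧ kingmanF t = x := by
  set Fi := fun t : ℝ => ∫ y in Ioi (1:ℝ), (y ^ 2 - t)⁻¹ with hFi
  have hπ : (0:ℝ) < π := Real.pi_pos
  -- lower endpoint
  set a : ℝ := -((π / x) ^ 2) - 1 with haa
  have ha0 : a < 0 := by rw [haa]; nlinarith [sq_nonneg (π / x)]
  have ha1 : a < 1 := by linarith
  have hna : 0 < -a := by linarith
  set d : ℝ := Real.sqrt (-a) with hd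
  have hd0 : 0 < d := Real.sqrt_pos.2 hna
  have hdge : π / x ≤ d := by
    have h1 : (π / x) ^ 2 ≤ -a := by rw [haa]; ring_nf; nlinarith
    have := Real.sqrt_le_sqrt h1
    rwa [Real.sqrt_sq (by positivity)] at this
  have hkfa : kingmanF a < x := by
    have : kingmanF a = (2 / d) * Real.arctan d := by
      rw [kingmanF, if_neg (by linarith), if_neg (by linarith), abs_of_neg ha0]
    rw [this]
    have h1 : (2 / d) * Real.arctan d < (2 / d) * (π / 2) :=
      mul_lt_mul_of_pos_left (Real.arctan_lt_pi_div_two d) (by positivity)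
    have h2 : (2 / d) * (π / 2) = π / d := by field_simp
    have h3 : π / d ≤ π / (π / x) := by
      apply div_le_div_of_nonneg_left hπ.le (by positivity) hdge
    have h4 : π / (π / x) = x := by field_simp
    linarith
  -- upper endpoint
  set u : ℝ := 1 - Real.exp (-(x + 1)) with hu
  have hu0 : 0 < u := by
    have h := Real.exp_lt_one_iff.2 (show -(x + 1) < 0 by linarith)
    rw [hu]; linarith
  have hu1 : u < 1 := by
    have := Real.exp_pos (-(x + 1)); rw [hu]; linarith
  set b : ℝ := u ^ 2 with hb
  have hb0 : 0 < b := by positivity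
  have hb1 : b < 1 := by nlinarith
  have hsb : Real.sqrt b = u := Real.sqrt_sq hu0.le
  have hkfb : x < kingmanF b := by
    have h1 : kingmanF b = (1 / u) * Real.log ((1 + u) / (1 - u)) := by
      rw [kingmanF, if_pos hb0, hsb]
    have h2 : Real.log (1 - u) = -(x + 1) := by
      rw [hu]; simp [Real.log_exp]
    have h3 : Real.log ((1 + u) / (1 - u)) = Real.log (1 + u) - Real.log (1 - u) :=
      Real.log_div (by linarith) (by linarith)
    have h4 : 0 ≤ Real.log (1 + u) := Real.log_nonneg (by linarith)
    have h5 : x + 1 ≤ Real.log ((1 + u) / (1 - u)) := by rw [h3, h2]; linarith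
    have h6 : (1:ℝ) ≤ 1 / u := by
      rw [le_div_iff₀ hu0]; linarith
    rw [h1]
    nlinarith
  have hab : a ≤ b := by linarith
  have hcont : ContinuousOn Fi (Icc a b) := fun t htt =>
    (kingmanInt_continuousAt (lt_of_le_of_lt htt.2 hb1)).continuousWithinAt
  have hFa : Fi a = kingmanF a / 2 := (kingman_key a ha1).2
  have hFb : Fi b = kingmanF b / 2 := (kingman_key b hb1).2
  have hmem : x / 2 ∈ Icc (Fi a) (Fi b) := by
    constructor
    · rw [hFa]; linarith
    · rw [hFb]; linarith
  obtain ⟨t, htmem, hteq⟩ := intermediate_value_Icc hab hcont hmem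
  have htlt : t < 1 := lt_of_le_of_lt htmem.2 hb1
  refine ⟨t, htlt, ?_⟩
  have := (kingman_key t htlt).2
  rw [hFi] at hteq
  simp only at hteq
  rw [this] at hteq
  linarith

lemma log_one_sub_ge {u : ℝ} (h0 : 0 ≤ u) (h1 : u ≤ 1/2) : -(2*u) ≤ Real.log (1-u) := by
  have h2 : (0:ℝ) < 1 - u := by linarith
  have h3 := Real.log_le_sub_one_of_pos (inv_pos.2 h2)
  rw [Real.log_inv] at h3
  have h4 : (1-u)⁻¹ - 1 = u / (1-u) := by field_simp; ring
  have h5 : u / (1-u) ≤ 2*u := by rw [div_le_iff₀ h2]; nlinarith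
  linarith

lemma log_expand {y : ℝ} (hy : 1 < y) :
    Real.log (1 - 1/y^2) = Real.log (y-1) + Real.log (y+1) - 2*Real.log y := by
  have hy0 : (0:ℝ) < y := by linarith
  have h1 : (0:ℝ) < y - 1 := by linarith
  have h2 : (0:ℝ) < y + 1 := by linarith
  have e1 : 1 - 1/y^2 = ((y-1)*(y+1))/(y^2) := by field_simp; ring
  rw [e1, Real.log_div (by positivity) (by positivity),
    Real.log_mul h1.ne' h2.ne', Real.log_pow]
  push_cast
  ring

lemma intlog1 : IntegrableOn (fun y : ℝ => Real.log (1 - 1/y^2)) (Ioi 1) := by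
  set g : ℝ → ℝ := fun y =>
    (y-1)*Real.log (y-1) + (y+1)*Real.log (y+1) - 2*(y*Real.log y) with hg
  have hgc : Continuous g := by
    apply Continuous.sub
    · apply Continuous.add
      · exact Real.continuous_mul_log.comp (continuous_id.sub continuous_const)
      · exact Real.continuous_mul_log.comp (continuous_id.add continuous_const)
    · exact continuous_const.mul Real.continuous_mul_log
  have hderiv : ∀ y ∈ Ioi (1:ℝ), HasDerivAt g (Real.log (1 - 1/y^2)) y := by
    intro y hy
    have hy1 : (1:ℝ) < y := hy
    have hy0 : (0:ℝ) < y := by linarith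
    have h1 : HasDerivAt (fun y : ℝ => (y-1)*Real.log (y-1)) (Real.log (y-1) + 1) y := by
      have := (Real.hasDerivAt_mul_log (show y - 1 ≠ 0 by linarith)).comp y
        ((hasDerivAt_id y).sub_const 1)
      simpa [Function.comp_def] using this
    have h2 : HasDerivAt (fun y : ℝ => (y+1)*Real.log (y+1)) (Real.log (y+1) + 1) y := by
      have := (Real.hasDerivAt_mul_log (show y + 1 ≠ 0 by linarith)).comp y
        ((hasDerivAt_id y).add_const 1)
      simpa [Function.comp_def] using this
    have h3 : HasDerivAt (fun y : ℝ => 2*(y*Real.log y)) (2*(Real.log y + 1)) y :=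
      (Real.hasDerivAt_mul_log hy0.ne').const_mul 2
    have h := (h1.add h2).sub h3
    refine h.congr_deriv ?_
    rw [log_expand hy1]
    ring
  have hnonpos : ∀ y ∈ Ioi (1:ℝ), Real.log (1 - 1/y^2) ≤ 0 := by
    intro y hy
    have hy1 : (1:ℝ) < y := hy
    apply Real.log_nonpos
    · have : 1/y^2 ≤ 1 := by rw [div_le_one (by positivity)]; nlinarith
      linarith
    · have : 0 < 1/y^2 := by positivity
      linarith
  have part1 : Tendsto (fun y : ℝ => y * Real.log (1 - 1/y^2)) atTop (𝓝 0) := by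
    apply tendsto_of_tendsto_of_tendsto_of_le_of_le'
      (g := fun y : ℝ => -(2/y)) (h := fun _ : ℝ => (0:ℝ))
    · have : Tendsto (fun y : ℝ => 2/y) atTop (𝓝 0) :=
        tendsto_const_nhds.div_atTop tendsto_id
      simpa using this.neg
    · exact tendsto_const_nhds
    · filter_upwards [eventually_ge_atTop (2:ℝ)] with y hy
      have hy0 : (0:ℝ) < y := by linarith
      have hu0 : (0:ℝ) ≤ 1/y^2 := by positivity
      have hu1 : 1/y^2 ≤ 1/2 := by
        rw [div_le_div_iff₀ (by positivity) (by norm_num)]; nlinarith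
      have := log_one_sub_ge hu0 hu1
      calc -(2/y) = y * (-(2*(1/y^2))) := by field_simp
        _ ≤ y * Real.log (1 - 1/y^2) := by
            apply mul_le_mul_of_nonneg_left this hy0.le
    · filter_upwards [eventually_gt_atTop (1:ℝ)] with y hy
      exact mul_nonpos_of_nonneg_of_nonpos (by linarith) (hnonpos y hy)
  have part2 : Tendsto (fun y : ℝ => Real.log (y+1) - Real.log (y-1)) atTop (𝓝 0) := by
    have h1 : Tendsto (fun y : ℝ => 1 + 2 / (y - 1)) atTop (𝓝 (1 + 0)) := by
      apply tendsto_const_nhds.add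
      exact tendsto_const_nhds.div_atTop (tendsto_atTop_add_const_right _ (-1) tendsto_id)
    have h2 : Tendsto (fun y : ℝ => Real.log (1 + 2 / (y - 1))) atTop (𝓝 0) := by
      have := (Real.continuousAt_log (by norm_num : (1:ℝ) ≠ 0)).tendsto.comp
        (by simpa using h1)
      simpa [Function.comp_def] using this
    apply h2.congr'
    filter_upwards [eventually_gt_atTop (1:ℝ)] with y hy
    have h3 : (0:ℝ) < y - 1 := by linarith
    have : 1 + 2 / (y - 1) = (y + 1) / (y - 1) := by field_simp; ring
    rw [this, Real.log_div (by linarith) h3.ne']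
  have htend : Tendsto g atTop (𝓝 0) := by
    have := part1.add part2
    rw [add_zero] at this
    apply this.congr'
    filter_upwards [eventually_gt_atTop (1:ℝ)] with y hy
    rw [hg]
    simp only
    rw [log_expand hy]
    ring
  exact integrableOn_Ioi_deriv_of_nonpos hgc.continuousWithinAt hderiv hnonpos htend

lemma intlog (s : ℝ) (hs : s ≤ 1) :
    IntegrableOn (fun y : ℝ => Real.log (1 - s/y^2)) (Ioi 1) := by
  have hmeas : AEStronglyMeasurable (fun y : ℝ => Real.log (1 - s/y^2))
      (volume.restrict (Ioi 1)) := by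
    apply ContinuousOn.aestronglyMeasurable _ measurableSet_Ioi
    apply ContinuousOn.log
    · apply continuousOn_const.sub
      exact continuousOn_const.div (continuous_pow 2).continuousOn
        (fun y hy => by have : (1:ℝ) < y := hy; positivity)
    · intro y hy
      have hy1 : (1:ℝ) < y := hy
      have : s / y^2 < 1 := by
        rw [div_lt_one (by positivity)]; nlinarith
      linarith
  rcases le_or_gt s 0 with hs0 | hs0
  · apply Integrable.mono' (((kingman_key 0 one_pos).1).const_mul (-s)) hmeas
    rw [ae_restrict_iff' measurableSet_Ioi]
    apply ae_of_all
    intro y hy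
    have hy1 : (1:ℝ) < y := hy
    have h0 : (0:ℝ) ≤ -s / y^2 := div_nonneg (by linarith) (by positivity)
    have h1 : (1:ℝ) ≤ 1 - s/y^2 := by
      have : s / y ^ 2 = -(-s/y^2) := by ring
      rw [this]; linarith
    rw [Real.norm_eq_abs, abs_of_nonneg (Real.log_nonneg h1)]
    have h2 := Real.log_le_sub_one_of_pos (show (0:ℝ) < 1 - s/y^2 by linarith)
    have h3 : 1 - s/y^2 - 1 = -s * (y^2 - 0)⁻¹ := by field_simp; ring
    rw [← h3]; linarith
  · apply Integrable.mono intlog1 hmeas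
    rw [ae_restrict_iff' measurableSet_Ioi]
    apply ae_of_all
    intro y hy
    have hy1 : (1:ℝ) < y := hy
    have hy2 : (0:ℝ) < y^2 := by positivity
    have ha : (0:ℝ) < 1 - 1/y^2 := by
      rw [sub_pos, div_lt_one hy2]; nlinarith
    have hb : 1 - 1/y^2 ≤ 1 - s/y^2 := by gcongr
    have hc : 1 - s/y^2 ≤ 1 := by
      have : (0:ℝ) < s/y^2 := by positivity
      linarith
    have hd : 1 - 1/y^2 ≤ 1 := by
      have : (0:ℝ) < 1/y^2 := by positivity
      linarith
    have hlog1 : Real.log (1 - s/y^2) ≤ 0 := Real.log_nonpos (by linarith) hc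
    have hlog2 : Real.log (1 - 1/y^2) ≤ Real.log (1 - s/y^2) := Real.log_le_log ha hb
    rw [Real.norm_eq_abs, Real.norm_eq_abs, abs_of_nonpos hlog1,
      abs_of_nonpos (Real.log_nonpos ha.le hd)]
    linarith

/-- For each `x > 0` there is a unique `t_x < 1` with `f(t_x) = x`, and the supremum of
`t ↦ (t/2)x + ∫₁^∞ log(1 - t/y²) dy` over `t ≤ 1` is attained at `t_x`. -/
theorem kingman_tx_exists_unique_and_sup (x : ℝ) (hx : 0 < x) :
    (∃! t : ℝ, t < 1 ∧ kingmanF t = x) ∧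
    (∀ t : ℝ, t < 1 → kingmanF t = x →
      ∀ s : ℝ, s ≤ 1 →
        s / 2 * x + ∫ y in Ioi (1:ℝ), Real.log (1 - s / y ^ 2)
          ≤ t / 2 * x + ∫ y in Ioi (1:ℝ), Real.log (1 - t / y ^ 2)) := by
  constructor
  · obtain ⟨t, ht1, ht2⟩ := kingman_exists x hx
    refine ⟨t, ⟨ht1, ht2⟩, ?_⟩
    rintro t' ⟨ht1', ht2'⟩
    rcases lt_trichotomy t' t with h | h | h
    · have := kingmanF_strict_mono h ht1; rw [ht2, ht2'] at this; linarith
    · exact h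
    · have := kingmanF_strict_mono h ht1'; rw [ht2, ht2'] at this; linarith
  · intro t ht hft s hs
    have hts : t ≤ 1 := ht.le
    have Kt := kingman_key t ht
    have hper : ∀ y ∈ Ioi (1:ℝ),
        Real.log (1 - s / y ^ 2) ≤ Real.log (1 - t / y ^ 2) + (t - s) * (y ^ 2 - t)⁻¹ := by
      intro y hy
      have hy1 : (1:ℝ) < y := hy
      have hy2 : (0:ℝ) < y ^ 2 := by positivity
      have hA : (0:ℝ) < y ^ 2 - s := by nlinarith
      have hB : (0:ℝ) < y ^ 2 - t := by nlinarith
      have eA : 1 - s / y ^ 2 = (y ^ 2 - s) / y ^ 2 := by field_simp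
      have eB : 1 - t / y ^ 2 = (y ^ 2 - t) / y ^ 2 := by field_simp
      rw [eA, eB, Real.log_div hA.ne' hy2.ne', Real.log_div hB.ne' hy2.ne']
      have h1 := Real.log_le_sub_one_of_pos (div_pos hA hB)
      rw [Real.log_div hA.ne' hB.ne'] at h1
      have h2 : (y ^ 2 - s) / (y ^ 2 - t) - 1 = (t - s) * (y ^ 2 - t)⁻¹ := by
        field_simp
        ring
      linarith
    have hint1 : IntegrableOn (fun y : ℝ => Real.log (1 - s / y ^ 2)) (Ioi 1) := intlog s hs
    have hint2 : IntegrableOn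
        (fun y : ℝ => Real.log (1 - t / y ^ 2) + (t - s) * (y ^ 2 - t)⁻¹) (Ioi 1) :=
      (intlog t hts).add (Kt.1.const_mul (t - s))
    have hmono := setIntegral_mono_on hint1 hint2 measurableSet_Ioi hper
    have hc : ∫ a in Ioi (1:ℝ), (t - s) * (a ^ 2 - t)⁻¹ = (t - s) * ∫ a in Ioi (1:ℝ), (a ^ 2 - t)⁻¹ :=
      integral_const_mul _ _
    rw [integral_add (intlog t hts) (Kt.1.const_mul (t - s)), hc, Kt.2, hft] at hmono
    linarith
end

section
/- With I as the rate function defined in Theorem 1 (I(x) = (t_x/2)x + ∫₁^∞ log(1 - t_x/y²) dy where f(t_x)=x), the limit lim_{x↓0} x·I(x) = π²/2 holds. -/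
open Real Set MeasureTheory Filter
open scoped Topology

lemma kingman_half_le_arctan {s : ℝ} (h0 : 0 ≤ s) (h1 : s ≤ 1) :
    s / 2 ≤ Real.arctan s := by
  have hd : ∀ y : ℝ, HasDerivAt (fun z => Real.arctan z - z / 2)
      (1 / (1 + y ^ 2) - 1 / 2) y := fun y =>
    (Real.hasDerivAt_arctan y).sub ((hasDerivAt_id y).div_const 2)
  have hmono : MonotoneOn (fun z => Real.arctan z - z / 2) (Icc (0:ℝ) 1) := by
    apply monotoneOn_of_deriv_nonneg (convex_Icc 0 1)
    · exact fun y _ => ((hd y).continuousAt).continuousWithinAt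
    · exact fun y _ => (hd y).differentiableAt.differentiableWithinAt
    · intro y hy
      rw [interior_Icc] at hy
      rw [(hd y).deriv]
      have h2 : 1 + y ^ 2 ≤ 2 := by nlinarith [hy.1.le, hy.2.le]
      have hp : (0:ℝ) < 1 + y ^ 2 := by positivity
      rw [sub_nonneg, div_le_div_iff₀ (by norm_num) hp]
      linarith
  have := hmono ⟨le_refl 0, zero_le_one⟩ ⟨h0, h1⟩ h0
  simpa using this

lemma kingman_integral {s : ℝ} (hs : 0 < s) :
    ∫ y in Ioi (1:ℝ), Real.log (1 + s ^ 2 / y ^ 2)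
      = s * π - Real.log (1 + s ^ 2) - 2 * s * Real.arctan (1 / s) := by
  set F : ℝ → ℝ := fun y => y * Real.log (1 + s ^ 2 / y ^ 2)
      + 2 * s * Real.arctan (y / s) with hFdef
  have hF : ∀ y : ℝ, 0 < y → HasDerivAt F (Real.log (1 + s ^ 2 / y ^ 2)) y := by
    intro y hy
    have hy2 : (y:ℝ) ^ 2 ≠ 0 := pow_ne_zero 2 hy.ne'
    have hpos : (0:ℝ) < 1 + s ^ 2 / y ^ 2 := by positivity
    have h0 := (hasDerivAt_const y 1).add
      ((hasDerivAt_const y (s ^ 2)).div (hasDerivAt_pow 2 y) hy2)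
    have hlog := h0.log hpos.ne'
    have hmul := (hasDerivAt_id y).mul hlog
    have harc : HasDerivAt (fun z : ℝ => Real.arctan (z / s))
        (1 / (1 + (y / s) ^ 2) * (1 / s)) y := by
      have := (Real.hasDerivAt_arctan (y / s)).comp y ((hasDerivAt_id y).div_const s)
      simpa [Function.comp_def] using this
    have htot := hmul.add (harc.const_mul (2 * s))
    convert htot using 1
    · rfl
    · rfl
    · rfl
    have hA : (1 + s ^ 2 / y ^ 2) ≠ 0 := hpos.ne'
    have hB : (1 + (y / s) ^ 2) ≠ 0 := by positivity
    simp only [Pi.add_apply, Pi.div_apply, id]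
    field_simp
    ring
  have hderiv : ∀ y ∈ Ioi (1:ℝ), HasDerivAt F (Real.log (1 + s ^ 2 / y ^ 2)) y :=
    fun y hy => hF y (lt_trans one_pos hy)
  have hcont : ContinuousWithinAt F (Ici (1:ℝ)) 1 :=
    (hF 1 one_pos).continuousAt.continuousWithinAt
  have hnonneg : ∀ y ∈ Ioi (1:ℝ), 0 ≤ Real.log (1 + s ^ 2 / y ^ 2) := by
    intro y hy
    apply Real.log_nonneg
    have : 0 ≤ s ^ 2 / y ^ 2 := by positivity
    linarith
  have hlim : Tendsto F atTop (𝓝 (s * π)) := by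
    have t1 : Tendsto (fun y : ℝ => y * Real.log (1 + s ^ 2 / y ^ 2)) atTop (𝓝 0) := by
      apply squeeze_zero' (g := fun y : ℝ => s ^ 2 / y)
      · filter_upwards [eventually_gt_atTop (0:ℝ)] with y hy
        have : 0 ≤ s ^ 2 / y ^ 2 := by positivity
        have := Real.log_nonneg (by linarith : (1:ℝ) ≤ 1 + s ^ 2 / y ^ 2)
        positivity
      · filter_upwards [eventually_gt_atTop (0:ℝ)] with y hy
        have hpos : (0:ℝ) < 1 + s ^ 2 / y ^ 2 := by positivity
        have hle : Real.log (1 + s ^ 2 / y ^ 2) ≤ s ^ 2 / y ^ 2 := by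
          have := Real.log_le_sub_one_of_pos hpos
          linarith
        calc y * Real.log (1 + s ^ 2 / y ^ 2) ≤ y * (s ^ 2 / y ^ 2) :=
              mul_le_mul_of_nonneg_left hle hy.le
          _ = s ^ 2 / y := by field_simp
      · exact tendsto_const_nhds.div_atTop tendsto_id
    have t2 : Tendsto (fun y : ℝ => 2 * s * Real.arctan (y / s)) atTop
        (𝓝 (2 * s * (π / 2))) := by
      have h1 : Tendsto (fun y : ℝ => y / s) atTop atTop :=
        Tendsto.atTop_div_const hs tendsto_id
      exact (((Real.tendsto_arctan_atTop.mono_right nhdsWithin_le_nhds).comp h1).const_mul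
        (2 * s))
    have := t1.add t2
    have heq : s * π = 0 + 2 * s * (π / 2) := by ring
    rw [heq]
    exact this
  have key := integral_Ioi_of_hasDerivAt_of_nonneg hcont hderiv hnonneg hlim
  rw [key]
  have hF1 : F 1 = Real.log (1 + s ^ 2) + 2 * s * Real.arctan (1 / s) := by
    simp [hFdef]
  rw [hF1]; ring

/-- With `I` the rate function of Theorem 1, `x·I(x) → π²/2` as `x ↓ 0`. -/
theorem kingman_rate_function_at_zero (tx : ℝ → ℝ)
    (htx : ∀ x : ℝ, 0 < x → tx x < 1 ∧ kingmanF (tx x) = x)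
    (I : ℝ → ℝ)
    (hI : ∀ x : ℝ, 0 < x →
      I x = tx x / 2 * x + ∫ y in Ioi (1:ℝ), Real.log (1 - tx x / y ^ 2)) :
    Tendsto (fun x : ℝ => x * I x) (nhdsWithin 0 (Ioi 0)) (nhds (π ^ 2 / 2)) := by
  set L := nhdsWithin (0:ℝ) (Ioi 0) with hL
  set s : ℝ → ℝ := fun x => Real.sqrt (-(tx x)) with hsdef
  -- basic facts on Ioo 0 1
  have key : ∀ x ∈ Ioo (0:ℝ) 1, tx x < 0 ∧ 0 < s x ∧
      x * s x = 2 * Real.arctan (s x) ∧ tx x = -(s x) ^ 2 := by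
    intro x hx
    obtain ⟨hx0, hx1⟩ := hx
    obtain ⟨htlt, hfx⟩ := htx x hx0
    have tneg : tx x < 0 := by
      by_contra hcon
      push_neg at hcon
      rcases eq_or_lt_of_le hcon with h0 | h0
      · rw [← h0] at hfx
        simp [kingmanF] at hfx
        linarith
      · -- 0 < tx x < 1
        rw [kingmanF, if_pos h0] at hfx
        set r := Real.sqrt (tx x) with hr
        have hr0 : 0 < r := Real.sqrt_pos.mpr h0
        have hr1 : r < 1 := by
          nlinarith [Real.sq_sqrt h0.le, Real.sqrt_nonneg (tx x)]
        have hlog1 : Real.log (1 - r) ≤ -r := by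
          have := Real.log_le_sub_one_of_pos (by linarith : (0:ℝ) < 1 - r)
          linarith
        have hlog2 : 0 ≤ Real.log (1 + r) := Real.log_nonneg (by linarith)
        have hdiv : Real.log ((1 + r) / (1 - r))
            = Real.log (1 + r) - Real.log (1 - r) :=
          Real.log_div (by linarith) (by linarith)
        have hge : r ≤ Real.log ((1 + r) / (1 - r)) := by
          rw [hdiv]; linarith
        have : 1 ≤ x := by
          rw [← hfx]
          rw [div_mul_eq_mul_div, one_mul, le_div_iff₀ hr0, one_mul]
          exact hge
        linarith
    have hspos : 0 < s x := Real.sqrt_pos.mpr (by linarith)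
    have hsq : tx x = -(s x) ^ 2 := by
      have := Real.sq_sqrt (by linarith : (0:ℝ) ≤ -(tx x))
      rw [hsdef]
      simp only
      nlinarith [this]
    have habs : |tx x| = -(tx x) := abs_of_neg tneg
    have hfx' : 2 / s x * Real.arctan (s x) = x := by
      rw [kingmanF, if_neg (by linarith), if_neg (by linarith)] at hfx
      rw [habs] at hfx
      exact hfx
    have hxs : x * s x = 2 * Real.arctan (s x) := by
      field_simp at hfx'
      linarith [hfx']
    exact ⟨tneg, hspos, hxs, hsq⟩
  have hmem : Ioo (0:ℝ) 1 ∈ L := Ioo_mem_nhdsGT one_pos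
  -- s x ≥ 1 and s x ≥ (π/2)/x on Ioo 0 1
  have hs1 : ∀ x ∈ Ioo (0:ℝ) 1, 1 ≤ s x := by
    intro x hx
    obtain ⟨_, hspos, hxs, _⟩ := key x hx
    by_contra hcon
    push_neg at hcon
    have harc := kingman_half_le_arctan hspos.le hcon.le
    have : s x ≤ x * s x := by
      rw [hxs]; linarith
    have : 1 ≤ x := by
      have := (le_mul_iff_one_le_left hspos).mp this
      exact this
    linarith [hx.2]
  have hs_lb : ∀ x ∈ Ioo (0:ℝ) 1, π / 2 * x⁻¹ ≤ s x := by
    intro x hx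
    obtain ⟨_, hspos, hxs, _⟩ := key x hx
    have harc : π / 4 ≤ Real.arctan (s x) := by
      have := Real.arctan_strictMono.monotone (hs1 x hx)
      simpa [Real.arctan_one] using this
    have hle : π / 2 ≤ x * s x := by rw [hxs]; linarith
    have h2 : π / 2 * x⁻¹ ≤ (x * s x) * x⁻¹ :=
      mul_le_mul_of_nonneg_right hle (inv_nonneg.mpr hx.1.le)
    have h3 : (x * s x) * x⁻¹ = s x := by
      rw [mul_comm x (s x), mul_assoc, mul_inv_cancel₀ hx.1.ne', mul_one]
    linarith
  -- s tends to infinity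
  have hstop : Tendsto s L atTop := by
    refine tendsto_atTop_mono' L ?_
      (tendsto_inv_nhdsGT_zero.const_mul_atTop (by positivity : (0:ℝ) < π / 2))
    filter_upwards [hmem] with x hx using hs_lb x hx
  have hxs : Tendsto (fun x => x * s x) L (𝓝 π) := by
    have h1 : Tendsto (fun x => 2 * Real.arctan (s x)) L (𝓝 (2 * (π / 2))) :=
      ((Real.tendsto_arctan_atTop.mono_right nhdsWithin_le_nhds).comp hstop).const_mul 2
    rw [show (π:ℝ) = 2 * (π / 2) by ring]
    apply h1.congr'
    filter_upwards [hmem] with x hx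
    exact ((key x hx).2.2.1).symm
  have hlog0 : Tendsto (fun x => x * Real.log (1 + (s x) ^ 2)) L (𝓝 0) := by
    have hg2 : Tendsto (fun t : ℝ => Real.log t / t) atTop (𝓝 0) := by
      have := Real.tendsto_pow_log_div_mul_add_atTop 1 0 1 one_ne_zero
      simpa using this
    have hg1 : Tendsto (fun t : ℝ => Real.log 2 / t) atTop (𝓝 0) :=
      tendsto_const_nhds.div_atTop tendsto_id
    have hG : Tendsto (fun t : ℝ => π * ((Real.log 2 + 2 * Real.log t) / t)) atTop
        (𝓝 (π * (0 + 2 * 0))) := by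
      apply Tendsto.const_mul
      have := hg1.add (hg2.const_mul 2)
      apply this.congr
      intro t
      rw [add_div]
      ring
    apply squeeze_zero' (g := fun x => π * ((Real.log 2 + 2 * Real.log (s x)) / s x))
    · filter_upwards [hmem] with x hx
      have h1 : (1:ℝ) ≤ 1 + (s x) ^ 2 := by nlinarith [(key x hx).2.1]
      exact mul_nonneg hx.1.le (Real.log_nonneg h1)
    · filter_upwards [hmem] with x hx
      obtain ⟨_, hspos, hxseq, _⟩ := key x hx
      have hs1x := hs1 x hx
      have hxle : x ≤ π / s x := by
        rw [le_div_iff₀ hspos]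
        have := Real.arctan_lt_pi_div_two (s x)
        rw [hxseq]
        linarith
      have hlogle : Real.log (1 + (s x) ^ 2) ≤ Real.log 2 + 2 * Real.log (s x) := by
        have h1 : 1 + (s x) ^ 2 ≤ 2 * (s x) ^ 2 := by nlinarith
        have h2 : Real.log (1 + (s x) ^ 2) ≤ Real.log (2 * (s x) ^ 2) :=
          Real.log_le_log (by positivity) h1
        rw [Real.log_mul (by norm_num) (by positivity), Real.log_pow] at h2
        simpa using h2
      have hnn : 0 ≤ Real.log (1 + (s x) ^ 2) :=
        Real.log_nonneg (by nlinarith)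
      calc x * Real.log (1 + (s x) ^ 2)
          ≤ (π / s x) * (Real.log 2 + 2 * Real.log (s x)) :=
            mul_le_mul hxle hlogle hnn (by positivity)
        _ = π * ((Real.log 2 + 2 * Real.log (s x)) / s x) := by ring
    · have := hG.comp hstop
      simpa [Function.comp_def] using this
  have harct : Tendsto (fun x => Real.arctan (1 / s x)) L (𝓝 0) := by
    have h1 : Tendsto (fun x => 1 / s x) L (𝓝 0) := by
      simpa [one_div, Pi.inv_def] using hstop.inv_tendsto_atTop
    have := (Real.continuous_arctan.tendsto 0).comp h1
    simpa [Function.comp_def] using this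
  have hmain : Tendsto (fun x => -((x * s x) ^ 2) / 2 + (x * s x) * π
      - x * Real.log (1 + (s x) ^ 2) - 2 * (x * s x) * Real.arctan (1 / s x)) L
      (𝓝 (-(π ^ 2) / 2 + π * π - 0 - 2 * π * 0)) :=
    ((((hxs.pow 2).neg.div_const 2).add (hxs.mul_const π)).sub hlog0).sub
      ((hxs.const_mul 2).mul harct)
  rw [show (π ^ 2 / 2 : ℝ) = -(π ^ 2) / 2 + π * π - 0 - 2 * π * 0 by ring]
  apply hmain.congr'
  filter_upwards [hmem] with x hx
  obtain ⟨tneg, hspos, hxseq, hsq⟩ := key x hx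
  have hint : (∫ y in Ioi (1:ℝ), Real.log (1 - tx x / y ^ 2))
      = s x * π - Real.log (1 + (s x) ^ 2) - 2 * s x * Real.arctan (1 / s x) := by
    have h2 : ∀ y : ℝ, 1 - tx x / y ^ 2 = 1 + (s x) ^ 2 / y ^ 2 := by
      intro y; rw [hsq]; ring
    simp only [h2]
    exact kingman_integral hspos
  rw [hI x hx.1, hint, hsq]
  ring
end

section
/- With I as the rate function from Theorem 1, lim_{x→∞} I(x)/x = 1/2. -/
open Real Set MeasureTheory Filter

noncomputable def kingmanG (y : ℝ) : ℝ :=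
  if y ≤ 2 then 4 * (y - 1) ^ (-1/2 : ℝ) else 2 / y ^ 2

lemma neg_log_le_two_div_sqrt {u : ℝ} (hu : 0 < u) : -Real.log u ≤ 2 / Real.sqrt u := by
  have hs : 0 < Real.sqrt u := Real.sqrt_pos.mpr hu
  have h1 : Real.log ((Real.sqrt u)⁻¹) ≤ (Real.sqrt u)⁻¹ - 1 :=
    Real.log_le_sub_one_of_pos (inv_pos.mpr hs)
  rw [Real.log_inv] at h1
  have h2 : Real.log u = 2 * Real.log (Real.sqrt u) := by
    rw [Real.log_sqrt hu.le]; ring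
  rw [div_eq_mul_inv]
  nlinarith [inv_pos.mpr hs]

lemma kingmanG_integrable : IntegrableOn kingmanG (Ioi 1) := by
  have hunion : Ioc (1:ℝ) 2 ∪ Ioi 2 = Ioi 1 := Ioc_union_Ioi_eq_Ioi (by norm_num)
  rw [← hunion]
  apply IntegrableOn.union
  · have h0 : IntervalIntegrable (fun x : ℝ => x ^ (-1/2 : ℝ)) volume 0 1 :=
      intervalIntegral.intervalIntegrable_rpow' (by norm_num)
    have h1 := h0.comp_sub_right 1
    rw [intervalIntegrable_iff_integrableOn_Ioc_of_le (by norm_num : (0:ℝ)+1 ≤ 1+1)] at h1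
    have h1' : IntegrableOn (fun x : ℝ => (x - 1) ^ (-1/2 : ℝ)) (Ioc 1 2) := by
      have e : Ioc ((0:ℝ)+1) (1+1) = Ioc 1 2 := by norm_num
      rw [e] at h1
      exact h1
    have h2 : IntegrableOn (fun y : ℝ => 4 * (y - 1) ^ (-1/2 : ℝ)) (Ioc 1 2) := h1'.const_mul 4
    exact h2.congr_fun (fun y hy => by simp [kingmanG, hy.2]) measurableSet_Ioc
  · have h1 : IntegrableOn (fun x : ℝ => x ^ (-2:ℝ)) (Ioi 2) :=
      integrableOn_Ioi_rpow_of_lt (by norm_num) (by norm_num)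
    have h2 : IntegrableOn (fun y : ℝ => 2 / y ^ 2) (Ioi 2) := by
      apply IntegrableOn.congr_fun (h1.const_mul 2) (fun y hy => ?_) measurableSet_Ioi
      have hy0 : (0:ℝ) < y := lt_trans (by norm_num) hy
      have hval : y ^ (-2:ℝ) = (y ^ 2)⁻¹ := by
        rw [Real.rpow_neg hy0.le, ← Real.rpow_natCast y 2]
        norm_num
      rw [hval, div_eq_mul_inv]
    exact h2.congr_fun (fun y hy => by
      have : ¬ (y ≤ 2) := not_le.mpr hy
      simp [kingmanG, this]) measurableSet_Ioi

lemma kingman_bound {t y : ℝ} (ht0 : 0 ≤ t) (ht1 : t ≤ 1) (hy : 1 < y) :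
    ‖Real.log (1 - t / y ^ 2)‖ ≤ kingmanG y := by
  have hy0 : 0 < y := lt_trans one_pos hy
  have hy2 : 1 < y ^ 2 := by nlinarith
  have hu1 : 0 < 1 - 1 / y ^ 2 := by
    rw [sub_pos, div_lt_one (by positivity)]; exact hy2
  have hts : t / y ^ 2 ≤ 1 / y ^ 2 := by gcongr
  have hut : 0 < 1 - t / y ^ 2 := by linarith
  have hle1 : 1 - t / y ^ 2 ≤ 1 := by
    have : 0 ≤ t / y ^ 2 := by positivity
    linarith
  have hlog_nonpos : Real.log (1 - t / y ^ 2) ≤ 0 := Real.log_nonpos (by linarith) hle1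
  rw [Real.norm_eq_abs, abs_of_nonpos hlog_nonpos]
  have hmono : -Real.log (1 - t / y ^ 2) ≤ -Real.log (1 - 1 / y ^ 2) := by
    have h := Real.log_le_log hu1 (by linarith : 1 - 1/y^2 ≤ 1 - t/y^2)
    linarith
  refine le_trans hmono ?_
  by_cases hcase : y ≤ 2
  · have h1 := neg_log_le_two_div_sqrt hu1
    have hkey : (y - 1) / 4 ≤ 1 - 1 / y ^ 2 := by
      rw [div_le_iff₀ (by norm_num : (0:ℝ) < 4)]
      have heq : (1 - 1 / y ^ 2) * 4 = ((y-1)*(y+1)/y^2) * 4 := by field_simp; ring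
      rw [heq]
      have h34 : (1:ℝ) ≤ (y + 1) / y ^ 2 * 4 := by
        rw [div_mul_eq_mul_div, le_div_iff₀ (by positivity)]
        nlinarith
      calc y - 1 = (y-1) * 1 := by ring
        _ ≤ (y-1) * ((y+1)/y^2*4) := by
            apply mul_le_mul_of_nonneg_left h34 (by linarith)
        _ = (y-1)*(y+1)/y^2*4 := by ring
    have hsq : Real.sqrt ((y - 1) / 4) ≤ Real.sqrt (1 - 1 / y ^ 2) :=
      Real.sqrt_le_sqrt hkey
    have hym : 0 < y - 1 := by linarith
    have hsqpos : 0 < Real.sqrt ((y - 1) / 4) := Real.sqrt_pos.mpr (by linarith)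
    have h2 : 2 / Real.sqrt (1 - 1 / y ^ 2) ≤ 2 / Real.sqrt ((y - 1) / 4) := by gcongr
    have h3 : Real.sqrt ((y - 1) / 4) = Real.sqrt (y - 1) / 2 := by
      rw [Real.sqrt_div hym.le, show ((4:ℝ)) = 2^2 by norm_num, Real.sqrt_sq (by norm_num : (0:ℝ) ≤ 2)]
    have hsy : 0 < Real.sqrt (y - 1) := Real.sqrt_pos.mpr hym
    have h4 : 2 / Real.sqrt ((y-1)/4) = 4 * (y - 1) ^ (-1/2 : ℝ) := by
      rw [h3, show (-1/2 : ℝ) = -(1/2) by norm_num, Real.rpow_neg hym.le,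
        ← Real.sqrt_eq_rpow]
      field_simp
      norm_num
    simp only [kingmanG, if_pos hcase]
    rw [← h4]
    linarith
  · push_neg at hcase
    have hy21 : 0 < y^2 - 1 := by nlinarith
    have hv : 1 - 1/y^2 = 1 / (1 + 1/(y^2 - 1)) := by
      rw [eq_div_iff (by positivity)]
      field_simp
      ring
    have h1 : -Real.log (1 - 1/y^2) = Real.log (1 + 1/(y^2-1)) := by
      rw [hv, one_div, Real.log_inv]; ring
    rw [h1]
    have h2 : Real.log (1 + 1/(y^2-1)) ≤ 1/(y^2-1) := by
      have := Real.log_le_sub_one_of_pos (show (0:ℝ) < 1 + 1/(y^2-1) by positivity)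
      linarith
    have h3 : 1/(y^2-1) ≤ 2/y^2 := by
      rw [div_le_div_iff₀ hy21 (by positivity)]
      nlinarith
    simp only [kingmanG, if_neg (not_le.mpr hcase)]
    linarith

lemma arctan_le_self' {s : ℝ} (hs : 0 < s) : Real.arctan s ≤ s := by
  have h0 : 0 < Real.arctan s := by
    rw [← Real.arctan_zero]
    exact Real.arctan_strictMono hs
  have h1 := Real.lt_tan h0 (Real.arctan_lt_pi_div_two s)
  rw [Real.tan_arctan] at h1
  exact h1.le

lemma tx_pos {tx : ℝ → ℝ} (htx : ∀ x : ℝ, 0 < x → tx x < 1 ∧ kingmanF (tx x) = x)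
    {x : ℝ} (hx : 2 < x) : 0 < tx x := by
  by_contra h
  push_neg at h
  have hF := (htx x (by linarith)).2
  rcases eq_or_lt_of_le h with h0 | hneg
  · rw [kingmanF, if_neg (by simp [h0]), if_pos h0] at hF
    linarith
  · have hs : 0 < Real.sqrt |tx x| := Real.sqrt_pos.mpr (abs_pos.mpr hneg.ne)
    rw [kingmanF, if_neg (by linarith), if_neg hneg.ne] at hF
    have harc : Real.arctan (Real.sqrt |tx x|) ≤ Real.sqrt |tx x| := arctan_le_self' hs
    have : kingmanF (tx x) ≤ 2 := by
      rw [kingmanF, if_neg (by linarith), if_neg hneg.ne]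
      calc 2 / Real.sqrt |tx x| * Real.arctan (Real.sqrt |tx x|)
          ≤ 2 / Real.sqrt |tx x| * Real.sqrt |tx x| := by
            apply mul_le_mul_of_nonneg_left harc (by positivity)
        _ = 2 := by field_simp
    rw [kingmanF, if_neg (by linarith), if_neg hneg.ne] at this
    linarith

lemma tx_lower {tx : ℝ → ℝ} (htx : ∀ x : ℝ, 0 < x → tx x < 1 ∧ kingmanF (tx x) = x)
    {x : ℝ} (hx : 2 < x) : (1 - 2 / x) ^ 2 ≤ tx x := by
  have hx0 : (0:ℝ) < x := by linarith
  have ht0 : 0 < tx x := tx_pos htx hx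
  have ht1 : tx x < 1 := (htx x hx0).1
  have hF := (htx x hx0).2
  rw [kingmanF, if_pos ht0] at hF
  set s := Real.sqrt (tx x) with hs_def
  have hs0 : 0 < s := Real.sqrt_pos.mpr ht0
  have hssq : s ^ 2 = tx x := Real.sq_sqrt ht0.le
  have hs1 : s < 1 := by nlinarith
  have hfrac_pos : 0 < (1 + s) / (1 - s) := by
    apply div_pos (by linarith) (by linarith)
  have hlog : Real.log ((1 + s) / (1 - s)) ≤ (1 + s) / (1 - s) - 1 :=
    Real.log_le_sub_one_of_pos hfrac_pos
  have heq : (1 + s) / (1 - s) - 1 = 2 * s / (1 - s) := by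
    rw [div_sub_one (by linarith : (1:ℝ) - s ≠ 0)]
    congr 1
    ring
  have hxle : x ≤ 2 / (1 - s) := by
    rw [← hF]
    calc 1 / s * Real.log ((1 + s) / (1 - s)) ≤ 1 / s * (2 * s / (1 - s)) := by
          apply mul_le_mul_of_nonneg_left (by rw [← heq]; exact hlog) (by positivity)
      _ = 2 / (1 - s) := by
          field_simp
  have h1s : 1 - s ≤ 2 / x := by
    rw [le_div_iff₀ hx0]
    have := (le_div_iff₀ (by linarith : (0:ℝ) < 1 - s)).mp hxle
    linarith
  have hge : 1 - 2 / x ≤ s := by linarith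
  have hnn : 0 ≤ 1 - 2 / x := by
    rw [sub_nonneg, div_le_one hx0]; linarith
  calc (1 - 2/x)^2 ≤ s^2 := by nlinarith
    _ = tx x := hssq

/-- With `I` the rate function of Theorem 1, `I(x)/x → 1/2` as `x → ∞`. -/
theorem kingman_rate_function_at_infty (tx : ℝ → ℝ)
    (htx : ∀ x : ℝ, 0 < x → tx x < 1 ∧ kingmanF (tx x) = x)
    (I : ℝ → ℝ)
    (hI : ∀ x : ℝ, 0 < x →
      I x = tx x / 2 * x + ∫ y in Ioi (1:ℝ), Real.log (1 - tx x / y ^ 2)) :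
    Tendsto (fun x : ℝ => I x / x) atTop (nhds (1 / 2)) := by
  set J : ℝ → ℝ := fun x => ∫ y in Ioi (1:ℝ), Real.log (1 - tx x / y ^ 2) with hJ_def
  set C : ℝ := ∫ y in Ioi (1:ℝ), kingmanG y with hC_def
  -- tx x → 1
  have h2x : Tendsto (fun x : ℝ => 2 / x) atTop (nhds 0) :=
    tendsto_const_nhds.div_atTop tendsto_id
  have hlow : Tendsto (fun x : ℝ => (1 - 2 / x) ^ 2) atTop (nhds 1) := by
    have h1 : Tendsto (fun x : ℝ => 1 - 2 / x) atTop (nhds (1 - 0)) :=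
      tendsto_const_nhds.sub h2x
    have := h1.pow 2
    norm_num at this
    exact this
  have htx1 : Tendsto tx atTop (nhds 1) := by
    apply tendsto_of_tendsto_of_tendsto_of_le_of_le' hlow tendsto_const_nhds
    · exact (eventually_gt_atTop 2).mono fun x hx => tx_lower htx hx
    · exact (eventually_gt_atTop 2).mono fun x hx => (htx x (by linarith)).1.le
  -- bound on J
  have hJbound : ∀ x : ℝ, 2 < x → ‖J x‖ ≤ C := by
    intro x hx
    apply MeasureTheory.norm_integral_le_of_norm_le kingmanG_integrable
    rw [ae_restrict_iff' measurableSet_Ioi]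
    refine ae_of_all _ fun y hy => ?_
    exact kingman_bound (tx_pos htx hx).le (htx x (by linarith)).1.le hy
  -- J x / x → 0
  have hJ0 : Tendsto (fun x : ℝ => J x / x) atTop (nhds 0) := by
    apply squeeze_zero_norm' (a := fun x : ℝ => C / x)
    · filter_upwards [eventually_gt_atTop 2] with x hx
      have hx0 : (0:ℝ) < x := by linarith
      rw [norm_div, Real.norm_eq_abs x, abs_of_pos hx0]
      gcongr
      exact hJbound x hx
    · exact tendsto_const_nhds.div_atTop tendsto_id
  -- assemble
  have hsplit : (fun x : ℝ => I x / x) =ᶠ[atTop] fun x => tx x / 2 + J x / x := by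
    filter_upwards [eventually_gt_atTop 2] with x hx
    have hx0 : (0:ℝ) < x := by linarith
    rw [hI x hx0, add_div, mul_div_assoc, div_self hx0.ne', mul_one]
  have hfin : Tendsto (fun x : ℝ => tx x / 2 + J x / x) atTop (nhds (1 / 2)) := by
    have := (htx1.div_const 2).add hJ0
    simpa using this
  exact Tendsto.congr' hsplit.symm hfin
end
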